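/- Theorem 3 (finite-population-valid confidence region via inverting imputation-assisted randomization tests): let Ω be a nonempty finite type, 𝒫 : PMF Ω, and f : Ω → ℝ the randomization statistic computed from the transformed realized outcomes at the true causal parameter (well defined independently of the assignment, under the true effect model and Assumption 3). On a probability space (Ω', μ), let (Z, Z_0, Z_1, Z_2, …) be an i.i.d. family of measurable Ω-valued random variables with common law 𝒫.toMeasure, where Z is the observed assignment and (Z_l) are the Monte Carlo re-randomization draws, and for L ≥ 1 define the Monte Carlo p-value at the true parameter p̂ L := (1/L) * ∑_{l=0}^{L-1} indicator {ω | f (Z_l ω) ≥ f (Z ω)}. Then for every α with 0 < α < 1, liminf_{L → ∞} (μ {ω | p̂ L ω ≥ α}).toReal ≥ 1 - α; equivalently, the confidence region CR = {β₀ : p̂(β₀) ≥ α} covers the true causal parameter with asymptotic probability at least 1 - α as the number of re-imputation runs grows. -/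

import Mathlib

open MeasureTheory ProbabilityTheory Filter Topology

/-- Theorem 3: finite-population-valid confidence region via inverting
imputation-assisted randomization tests.  The family `ZZ` models the observed
assignment `ZZ none` together with the Monte Carlo re-randomization draws
`ZZ (some l)`, all i.i.d. with common law `P.toMeasure`. -/
theorem theorem3_confidence_region_coverage
    {Ω : Type*} [Fintype Ω] [Nonempty Ω] [MeasurableSpace Ω] [MeasurableSingletonClass Ω]
    {Ω' : Type*} [MeasurableSpace Ω'] (μ : Measure Ω') [IsProbabilityMeasure μ]
    (P : PMF Ω)                   -- randomization distribution (Assumption 1)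
    (f : Ω → ℝ)                   -- randomization statistic at the true causal parameter
    (ZZ : Option ℕ → Ω' → Ω)      -- observed assignment and Monte Carlo draws
    (hZZmeas : ∀ j, Measurable (ZZ j))
    (hZZlaw : ∀ j, μ.map (ZZ j) = P.toMeasure)            -- common law
    (hZZindep : iIndepFun ZZ μ)  -- i.i.d. family
    (phat : ℕ → Ω' → ℝ)           -- Monte Carlo p-value at the true parameter
    (hphat : ∀ L ω, phat L ω =
      (1 / (L : ℝ)) * ∑ l ∈ Finset.range L,
        (if f (ZZ (some l) ω) ≥ f (ZZ none ω) then (1 : ℝ) else 0)) :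
    ∀ α : ℝ, 0 < α → α < 1 →
      (1 : ℝ) - α ≤ atTop.liminf (fun L => (μ {ω | phat L ω ≥ α}).toReal) := by
  classical
  intro α hα0 hα1
  -- the ideal p-value function
  set g : Ω → ℝ := fun z => (P.toMeasure {z' | f z' ≥ f z}).toReal with hgdef
  -- superuniformity of the ideal p-value
  have hsup : (P.toMeasure {z | g z ≤ α}).toReal ≤ α := by
    by_cases hS : {z : Ω | g z ≤ α} = ∅
    · simp [hS]; linarith
    · obtain ⟨zst, hzstS, hzstmin⟩ := Set.exists_min_image {z : Ω | g z ≤ α} f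
        (Set.toFinite _) (Set.nonempty_iff_ne_empty.2 hS)
      have hsub : {z : Ω | g z ≤ α} ⊆ {z' | f z' ≥ f zst} := fun z hz => hzstmin z hz
      calc (P.toMeasure {z | g z ≤ α}).toReal
          ≤ (P.toMeasure {z' | f z' ≥ f zst}).toReal :=
            ENNReal.toReal_mono (measure_ne_top _ _) (measure_mono hsub)
        _ = g zst := rfl
        _ ≤ α := hzstS
  -- coverage of the ideal test
  have hcov : 1 - α ≤ (μ {ω | α < g (ZZ none ω)}).toReal := by
    have hmapA : μ {ω | α < g (ZZ none ω)} = P.toMeasure {z | α < g z} := by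
      have h1 : {ω | α < g (ZZ none ω)} = ZZ none ⁻¹' {z | α < g z} := rfl
      rw [h1, ← Measure.map_apply (hZZmeas none) .of_discrete, hZZlaw]
    rw [hmapA]
    have h2 : {z : Ω | α < g z} = {z | g z ≤ α}ᶜ := by ext z; simp [not_le]
    rw [h2, measure_compl .of_discrete (measure_ne_top _ _), measure_univ,
      ENNReal.toReal_sub_of_le prob_le_one ENNReal.one_ne_top, ENNReal.toReal_one]
    linarith
  -- strong law of large numbers, for every reference value z
  have hslln : ∀ᵐ ω ∂μ, ∀ z : Ω, Tendsto (fun L : ℕ => (1 / (L : ℝ)) *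
      ∑ l ∈ Finset.range L, (if f (ZZ (some l) ω) ≥ f z then (1 : ℝ) else 0))
      atTop (𝓝 (g z)) := by
    rw [ae_all_iff]
    intro z
    set h : Ω → ℝ := fun z' => if f z' ≥ f z then (1 : ℝ) else 0 with hhdef
    have hhm : Measurable h := .of_discrete
    set Y : ℕ → Ω' → ℝ := fun l => h ∘ ZZ (some l) with hYdef
    have hYm : ∀ l, Measurable (Y l) := fun l => hhm.comp (hZZmeas _)
    have hint : Integrable (Y 0) μ := by
      apply (integrable_const (1 : ℝ)).mono' (hYm 0).aestronglyMeasurable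
      filter_upwards with ω
      simp only [Y, h, Function.comp_apply]
      split <;> simp
    have hindep : Pairwise (Function.onFun (IndepFun · · μ) Y) := fun i j hij =>
      (hZZindep.indepFun (by simpa using hij)).comp hhm hhm
    have hident : ∀ l, IdentDistrib (Y l) (Y 0) μ μ := fun l =>
      IdentDistrib.comp ⟨(hZZmeas _).aemeasurable, (hZZmeas _).aemeasurable,
        by rw [hZZlaw, hZZlaw]⟩ hhm
    have hmean : μ[Y 0] = g z := by
      have h3 : μ[Y 0] = ∫ z', h z' ∂(μ.map (ZZ (some 0))) :=
        (integral_map (hZZmeas _).aemeasurable hhm.aestronglyMeasurable).symm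
      rw [h3, hZZlaw]
      have h4 : h = Set.indicator {z' | f z' ≥ f z} 1 := by
        ext z'
        by_cases hz' : f z' ≥ f z <;> simp [h, hz', Set.indicator_apply]
      rw [h4, integral_indicator_one .of_discrete]
      rfl
    have hlaw := strong_law_ae Y hint hindep hident
    rw [hmean] at hlaw
    filter_upwards [hlaw] with ω hω
    simpa only [one_div, smul_eq_mul, Y, h, Function.comp_apply] using hω
  -- measurability of the Monte Carlo p-values
  have hpm : ∀ L, Measurable (phat L) := by
    intro L
    have h5 : phat L = fun ω => (1 / (L : ℝ)) * ∑ l ∈ Finset.range L,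
        (if f (ZZ (some l) ω) ≥ f (ZZ none ω) then (1 : ℝ) else 0) := funext (hphat L)
    rw [h5]
    apply Measurable.const_mul
    apply Finset.measurable_sum
    intro l _
    apply Measurable.ite _ measurable_const measurable_const
    have h6 : {ω | f (ZZ (some l) ω) ≥ f (ZZ none ω)} =
        (fun ω => (ZZ none ω, ZZ (some l) ω)) ⁻¹' {p : Ω × Ω | f p.2 ≥ f p.1} := rfl
    rw [h6]
    exact ((hZZmeas none).prodMk (hZZmeas (some l))) .of_discrete
  -- assemble via (a hands-on version of) Fatou's lemma for sets
  set s : ℕ → Set Ω' := fun L => {ω | phat L ω ≥ α} with hsdef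
  have hsm : ∀ L, MeasurableSet (s L) := fun L => (hpm L) measurableSet_Ici
  set I : ℕ → Set Ω' := fun n => ⋂ (L : ℕ) (_ : n ≤ L), s L with hIdef
  have hImono : Monotone I := fun m n hmn ω hω =>
    Set.mem_iInter₂.2 fun L hL => Set.mem_iInter₂.1 hω L (hmn.trans hL)
  have key : μ {ω | α < g (ZZ none ω)} ≤ μ (⋃ n, I n) := by
    apply measure_mono_ae
    filter_upwards [hslln] with ω hω hmem
    have htend : Tendsto (fun L => phat L ω) atTop (𝓝 (g (ZZ none ω))) := by
      have := hω (ZZ none ω)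
      convert this using 2 with L
      exact hphat L ω
    have hev : ∀ᶠ L in atTop, α < phat L ω := htend.eventually_const_lt hmem
    obtain ⟨n, hn⟩ := hev.exists_forall_of_atTop
    exact Set.mem_iUnion.2 ⟨n, Set.mem_iInter₂.2 fun L hL => (hn L hL).le⟩
  have hμI : Tendsto (fun n => (μ (I n)).toReal) atTop (𝓝 ((μ (⋃ n, I n)).toReal)) :=
    (ENNReal.tendsto_toReal (measure_ne_top _ _)).comp (tendsto_measure_iUnion_atTop hImono)
  have hliminf_ge : ∀ n, (μ (I n)).toReal ≤
      atTop.liminf (fun L => (μ (s L)).toReal) := by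
    intro n
    apply le_liminf_of_le
    · refine isCoboundedUnder_ge_of_le atTop (x := (1 : ℝ)) fun L => ?_
      calc (μ (s L)).toReal ≤ (μ Set.univ).toReal :=
            ENNReal.toReal_mono (measure_ne_top _ _) (measure_mono (Set.subset_univ _))
        _ = 1 := by simp
    · filter_upwards [eventually_ge_atTop n] with L hL
      exact ENNReal.toReal_mono (measure_ne_top _ _)
        (measure_mono fun ω hω => Set.mem_iInter₂.1 hω L hL)
  calc (1 : ℝ) - α ≤ (μ {ω | α < g (ZZ none ω)}).toReal := hcov
    _ ≤ (μ (⋃ n, I n)).toReal := ENNReal.toReal_mono (measure_ne_top _ _) key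
    _ ≤ atTop.liminf (fun L => (μ (s L)).toReal) := le_of_tendsto' hμI hliminf_ge
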